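/- Let r : Grp ⥤ Grp⋉Grp be the functor sending a group G to (G, G, conj), where conj : G →* MulAut G is the conjugation action conj(g)(h) = g h g⁻¹, and sending a group homomorphism φ : G →* G' to the pair (φ, φ). Then r is a well-defined functor and admits a left adjoint sending (G, H, ψ) to the semidirect product H ⋊[ψ] G; equivalently, there is a bijection, natural in (G, H, ψ) and in G', between morphisms (G, H, ψ) → (G', G', conj) in Grp⋉Grp and group homomorphisms H ⋊[ψ] G →* G'. -/

import Mathlib

open CategoryTheory

universe u

/-- An object of the category `Grp ⋉ Grp`: a pair of groups `G`, `H` together with an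
action `ψ : G →* MulAut H` of `G` on `H` by automorphisms. -/
structure GrpAct : Type (u + 1) where
  G : Type u
  [grpG : Group G]
  H : Type u
  [grpH : Group H]
  ψ : G →* MulAut H

attribute [instance] GrpAct.grpG GrpAct.grpH

/-- A morphism `(G, H, ψ) ⟶ (G', H', ψ')` in `Grp ⋉ Grp`: a pair of group homomorphisms
`(u, f)` such that `f (ψ g h) = ψ' (u g) (f h)` for all `g`, `h`. -/
@[ext]
structure GrpActHom (P Q : GrpAct.{u}) where
  u : P.G →* Q.G
  f : P.H →* Q.H
  comm : ∀ (g : P.G) (h : P.H), f (P.ψ g h) = Q.ψ (u g) (f h)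

instance : CategoryStruct (GrpAct.{u}) where
  Hom := GrpActHom
  id P := { u := MonoidHom.id _, f := MonoidHom.id _, comm := fun _ _ => rfl }
  comp {P Q R} α β :=
    { u := β.u.comp α.u
      f := β.f.comp α.f
      comm := fun g h => by
        simp only [MonoidHom.comp_apply, α.comm, β.comm] }

@[ext]
lemma GrpAct.hom_ext {P Q : GrpAct.{u}} (α β : P ⟶ Q)
    (h1 : α.u = β.u) (h2 : α.f = β.f) : α = β :=
  GrpActHom.ext h1 h2

instance : Category (GrpAct.{u}) where
  id_comp f := by ext <;> rfl
  comp_id f := by ext <;> rfl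
  assoc f g h := by ext <;> rfl

/-- The conjugation functor `r : Grp ⥤ Grp ⋉ Grp`, sending a group `G` to
`(G, G, conj)` where `conj : G →* MulAut G` is the conjugation action, and a group
homomorphism `φ` to the pair `(φ, φ)`. -/
def conjFunctor : GrpCat.{u} ⥤ GrpAct.{u} where
  obj G := { G := G, H := G, ψ := MulAut.conj }
  map {G G'} φ :=
    { u := φ.hom
      f := φ.hom
      comm := fun g h => by
        simp [MulAut.conj_apply, map_mul, map_inv] }
  map_id G := by
    ext <;> rfl
  map_comp φ ψ := by
    ext <;> rfl

open SemidirectProduct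

/-- The semidirect product functor, left adjoint to `conjFunctor`. -/
def sdpFunctor : GrpAct.{u} ⥤ GrpCat.{u} where
  obj P := GrpCat.of (P.H ⋊[P.ψ] P.G)
  map {P Q} α := GrpCat.ofHom
    (SemidirectProduct.map α.f α.u (fun g => by ext h; exact α.comm g h))
  map_id P := GrpCat.hom_ext (SemidirectProduct.hom_ext (by ext h <;> rfl) (by ext g <;> rfl))
  map_comp α β := GrpCat.hom_ext (SemidirectProduct.hom_ext (by ext h <;> rfl) (by ext g <;> rfl))

/-- Forward direction of the hom equivalence. -/
def sdpToFun (P : GrpAct.{u}) (G' : GrpCat.{u}) (F : sdpFunctor.obj P ⟶ G') :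
    P ⟶ conjFunctor.obj G' where
  u := F.hom.comp inr
  f := F.hom.comp inl
  comm g h := by
    show F.hom (inl (P.ψ g h)) = F.hom (inr g) * F.hom (inl h) * (F.hom (inr g))⁻¹
    rw [inl_aut]; exact (F.hom.map_mul _ _).trans (congrArg₂ (· * ·) (F.hom.map_mul _ _) ((F.hom.comp inr).map_inv g))

/-- Backward direction of the hom equivalence. -/
def sdpInvFun (P : GrpAct.{u}) (G' : GrpCat.{u}) (α : P ⟶ conjFunctor.obj G') :
    sdpFunctor.obj P ⟶ G' :=
  GrpCat.ofHom (SemidirectProduct.lift α.f α.u (fun g => by ext h; exact α.comm g h))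

/-- The hom equivalence of the adjunction. -/
def sdpHomEquiv (P : GrpAct.{u}) (G' : GrpCat.{u}) :
    (sdpFunctor.obj P ⟶ G') ≃ (P ⟶ conjFunctor.obj G') where
  toFun := sdpToFun P G'
  invFun := sdpInvFun P G'
  left_inv F := GrpCat.hom_ext (SemidirectProduct.lift_unique F.hom).symm
  right_inv α := by
    ext g
    · exact lift_inr α.f α.u (fun g => by ext h; exact α.comm g h) g
    · exact lift_inl α.f α.u (fun g => by ext h; exact α.comm g h) g

@[simp] lemma sdpInvFun_inl (P : GrpAct.{u}) (G' : GrpCat.{u}) (α : P ⟶ conjFunctor.obj G')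
    (h : P.H) : sdpInvFun P G' α (inl h) = α.f h :=
  lift_inl α.f α.u (fun g => by ext h; exact α.comm g h) h

@[simp] lemma sdpInvFun_inr (P : GrpAct.{u}) (G' : GrpCat.{u}) (α : P ⟶ conjFunctor.obj G')
    (g : P.G) : sdpInvFun P G' α (inr g) = α.u g :=
  lift_inr α.f α.u (fun g => by ext h; exact α.comm g h) g

@[simp] lemma sdpFunctor_map_inl {P Q : GrpAct.{u}} (α : P ⟶ Q) (h : P.H) :
    sdpFunctor.map α (inl h) = inl (α.f h) :=
  map_inl α.f α.u (fun g => by ext h; exact α.comm g h) h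

@[simp] lemma sdpFunctor_map_inr {P Q : GrpAct.{u}} (α : P ⟶ Q) (g : P.G) :
    sdpFunctor.map α (inr g) = inr (α.u g) :=
  map_inr α.f α.u (fun g => by ext h; exact α.comm g h) g

@[simp] lemma GrpAct.comp_f {P Q R : GrpAct.{u}} (α : P ⟶ Q) (β : Q ⟶ R) :
    (α ≫ β).f = β.f.comp α.f := rfl

@[simp] lemma GrpAct.comp_u {P Q R : GrpAct.{u}} (α : P ⟶ Q) (β : Q ⟶ R) :
    (α ≫ β).u = β.u.comp α.u := rfl

/-- The conjugation functor `r : Grp ⥤ Grp ⋉ Grp` is a well-defined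
functor and admits a left adjoint sending `(G, H, ψ)` to the semidirect product
`H ⋊[ψ] G`; equivalently, there is a bijection, natural in `(G, H, ψ)` and in `G'`,
between morphisms `(G, H, ψ) ⟶ (G', G', conj)` in `Grp ⋉ Grp` and group homomorphisms
`H ⋊[ψ] G →* G'`. -/
theorem conjFunctor_has_left_adjoint_semidirectProduct :
    ∃ L : GrpAct.{u} ⥤ GrpCat.{u}, Nonempty (L ⊣ conjFunctor.{u}) ∧
      ∀ P : GrpAct.{u}, Nonempty (L.obj P ≅ GrpCat.of (P.H ⋊[P.ψ] P.G)) := by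
  refine ⟨sdpFunctor, ⟨Adjunction.mkOfHomEquiv {
    homEquiv := sdpHomEquiv
    homEquiv_naturality_left_symm := fun {P Q G'} α F => by
      apply GrpCat.hom_ext
      apply SemidirectProduct.hom_ext
      · ext h
        show sdpInvFun P G' (α ≫ F) (inl h) = sdpInvFun Q G' F (sdpFunctor.map α (inl h))
        simp; rfl
      · ext g
        show sdpInvFun P G' (α ≫ F) (inr g) = sdpInvFun Q G' F (sdpFunctor.map α (inr g))
        simp; rfl
    homEquiv_naturality_right := fun {P G' G''} F φ => by
      ext g <;> rfl }⟩,
    fun P => ⟨Iso.refl _⟩⟩
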